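/- For every natural number n ≥ 3, the function f(s) = (1 − e^{−4ns/(n+1)})/((1 − e^{−4s/(n+1)})·(1 − e^{−(2n−2)s/(n+1)})·(1 − e^{−2ns/(n+1)})²), defined for s > 0, has Hilbert-series Laurent coefficients (a₀, a₁) of order 3 at s = 0 with a₀ = a₁ = (n+1)³/(8n(n−1)). -/

import Mathlib

open Real Filter Set Topology

/-- The function `(1 - e^{-x})/x`, extended by `1` at `x = 0`. -/
noncomputable def vfun : ℝ → ℝ := fun x => if x = 0 then 1 else (1 - Real.exp (-x)) / x

lemma vfun_zero : vfun 0 = 1 := if_pos rfl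

lemma vfun_ne {x : ℝ} (hx : x ≠ 0) : vfun x = (1 - Real.exp (-x)) / x := if_neg hx

lemma hasDerivAt_vfun : HasDerivAt vfun (-(1/2)) 0 := by
  rw [hasDerivAt_iff_tendsto_slope]
  rw [← tendsto_sub_nhds_zero_iff]
  apply squeeze_zero_norm' (a := fun x : ℝ => 2/9 * |x|)
  · have h1 : ∀ᶠ x : ℝ in 𝓝[≠] 0, |x| ≤ 1 := by
      apply eventually_nhdsWithin_of_eventually_nhds
      filter_upwards [Metric.ball_mem_nhds (0:ℝ) one_pos] with x hx
      rw [Metric.mem_ball, Real.dist_eq, sub_zero] at hx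
      exact hx.le
    filter_upwards [h1, self_mem_nhdsWithin] with x hx1 hx0
    have hx : x ≠ 0 := hx0
    have hexp := Real.exp_bound (x := -x) (by rwa [abs_neg]) (by norm_num : 0 < 3)
    have hsum : ∑ i ∈ Finset.range 3, (-x) ^ i / (i.factorial : ℝ) = 1 - x + x^2/2 := by
      simp [Finset.sum_range_succ]
      ring
    rw [hsum] at hexp
    have hx2 : (0:ℝ) < x^2 := by positivity
    have hslope : slope vfun 0 x - (-(1/2)) = -(Real.exp (-x) - (1 - x + x^2/2)) / x^2 := by
      rw [slope_def_field, vfun_zero, vfun_ne hx]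
      field_simp
      ring
    rw [abs_neg] at hexp
    norm_num [Nat.factorial] at hexp
    rw [Real.norm_eq_abs, hslope, abs_div, abs_neg, abs_of_pos hx2]
    have hax : |x| ≠ 0 := abs_ne_zero.mpr hx
    calc |Real.exp (-x) - (1 - x + x^2/2)| / x^2
        ≤ |x|^3 * (2/9) / x^2 := by gcongr
      _ = 2/9 * |x| := by
          field_simp
          rw [← sq_abs x]
  · have h : Filter.Tendsto (fun x : ℝ => 2/9 * |x|) (𝓝 0) (𝓝 (2/9 * |0|)) :=
      (continuous_const.mul continuous_abs).tendsto 0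
    simpa using h.mono_left nhdsWithin_le_nhds

lemma hasDerivAt_vfun_comp (k : ℝ) : HasDerivAt (fun s : ℝ => vfun (k * s)) (-(1/2) * k) 0 := by
  have h1 : HasDerivAt (fun s : ℝ => k * s) k 0 := by
    simpa using (hasDerivAt_id (0:ℝ)).const_mul k
  have h2 : HasDerivAt vfun (-(1/2)) (k * 0) := by simpa using hasDerivAt_vfun
  exact h2.comp 0 h1

lemma hasDerivAt_G (A b c d a₀ : ℝ) :
    HasDerivAt (fun s : ℝ => a₀ * (vfun (A*s) / (vfun (b*s) * vfun (c*s) * vfun (d*s)^2)))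
      (a₀ * ((b + c + 2*d - A)/2)) 0 := by
  have hA := hasDerivAt_vfun_comp A
  have hb := hasDerivAt_vfun_comp b
  have hc := hasDerivAt_vfun_comp c
  have hd := hasDerivAt_vfun_comp d
  have hq : HasDerivAt (fun s : ℝ => vfun (b*s) * vfun (c*s) * vfun (d*s)^2)
      (((-(1/2) * b) * vfun (c*0) + vfun (b*0) * (-(1/2) * c)) * vfun (d*0)^2
        + (vfun (b*0) * vfun (c*0)) * ((2:ℕ) * vfun (d*0)^1 * (-(1/2) * d))) 0 :=
    (hb.mul hc).mul (hd.pow 2)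
  have hne : vfun (b*(0:ℝ)) * vfun (c*0) * vfun (d*0)^2 ≠ 0 := by
    simp [vfun_zero]
  have h := (hA.div hq hne).const_mul a₀
  refine h.congr_deriv ?_
  simp only [mul_zero, vfun_zero]
  ring

lemma one_sub_exp_ne {x : ℝ} (hx : 0 < x) : 1 - Real.exp (-x) ≠ 0 := by
  have h : Real.exp (-x) < 1 := Real.exp_lt_one_iff.mpr (by linarith)
  intro hh; linarith

/-- Regularized Hilbert series of the D-type threefold. -/
noncomputable def Gf (N : ℝ) : ℝ → ℝ := fun s =>
  ((N+1)^3/(8*N*(N-1))) * (vfun ((4*N/(N+1))*s) /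
    (vfun ((4/(N+1))*s) * vfun (((2*N-2)/(N+1))*s) * vfun ((2*N/(N+1))*s)^2))

lemma Gf_zero (N : ℝ) : Gf N 0 = (N+1)^3/(8*N*(N-1)) := by
  simp [Gf, vfun_zero]

lemma hasDerivAt_Gf {N : ℝ} (hN : 3 ≤ N) :
    HasDerivAt (Gf N) ((N+1)^3/(8*N*(N-1))) 0 := by
  have h1 : N + 1 ≠ 0 := by intro h; linarith [h]
  have h := hasDerivAt_G (4*N/(N+1)) (4/(N+1)) ((2*N-2)/(N+1)) (2*N/(N+1)) ((N+1)^3/(8*N*(N-1)))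
  have hc2 : (4/(N+1) + (2*N-2)/(N+1) + 2*(2*N/(N+1)) - 4*N/(N+1))/2 = 1 := by
    field_simp
    ring
  rw [hc2, mul_one] at h
  exact h

lemma Gf_key {N : ℝ} (hN : 3 ≤ N) {s : ℝ} (hs : 0 < s) :
    Gf N s = s^3 * ((1 - Real.exp (-(4 * N * s / (N + 1))))
        / ((1 - Real.exp (-(4 * s / (N + 1))))
           * (1 - Real.exp (-((2 * N - 2) * s / (N + 1))))
           * (1 - Real.exp (-(2 * N * s / (N + 1)))) ^ 2)) := by
  have h0 : (0:ℝ) < N := by linarith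
  have h1 : (0:ℝ) < N + 1 := by linarith
  have h2 : (0:ℝ) < N - 1 := by linarith
  have hs0 : s ≠ 0 := ne_of_gt hs
  have e1 : (4*N/(N+1))*s = 4*N*s/(N+1) := by ring
  have e2 : (4/(N+1))*s = 4*s/(N+1) := by ring
  have e3 : ((2*N-2)/(N+1))*s = (2*N-2)*s/(N+1) := by ring
  have e4 : (2*N/(N+1))*s = 2*N*s/(N+1) := by ring
  have p1 : 0 < 4*N*s/(N+1) := div_pos (by nlinarith) h1
  have p2 : 0 < 4*s/(N+1) := div_pos (by linarith) h1
  have p3 : 0 < (2*N-2)*s/(N+1) := div_pos (by nlinarith) h1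
  have p4 : 0 < 2*N*s/(N+1) := div_pos (by nlinarith) h1
  have u1 := one_sub_exp_ne p1
  have u2 := one_sub_exp_ne p2
  have u3 := one_sub_exp_ne p3
  have u4 := one_sub_exp_ne p4
  rw [Gf, vfun_ne (by rw [e1]; exact ne_of_gt p1), vfun_ne (by rw [e2]; exact ne_of_gt p2),
      vfun_ne (by rw [e3]; exact ne_of_gt p3), vfun_ne (by rw [e4]; exact ne_of_gt p4)]
  rw [e1, e2, e3, e4]
  generalize (1 - Real.exp (-(4*N*s/(N+1)))) = U1
  generalize hU2 : (1 - Real.exp (-(4*s/(N+1)))) = U2 at u2 ⊢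
  generalize hU3 : (1 - Real.exp (-((2*N-2)*s/(N+1)))) = U3 at u3 ⊢
  generalize hU4 : (1 - Real.exp (-(2*N*s/(N+1)))) = U4 at u4 ⊢
  field_simp
  ring


/-- `f` has Hilbert-series Laurent coefficients `(a₀, a₁)` of order `n` at `s = 0`:
`sⁿ·f(s) → a₀` and `sⁿ⁻¹·(f(s) − a₀/sⁿ) → a₁` as `s → 0⁺`. -/
def HSLaurentCoeffs (f : ℝ → ℝ) (n : ℕ) (a₀ a₁ : ℝ) : Prop :=
  Filter.Tendsto (fun s => s ^ n * f s) (nhdsWithin 0 (Set.Ioi 0)) (nhds a₀) ∧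
  Filter.Tendsto (fun s => s ^ (n - 1) * (f s - a₀ / s ^ n))
    (nhdsWithin 0 (Set.Ioi 0)) (nhds a₁)

/-- The Hilbert series of the D-type threefold `w² + x² + y²z + zⁿ = 0` (`n ≥ 3`) has
Laurent coefficients `a₀ = a₁ = (n+1)³/(8n(n−1))` of order 3. -/
theorem D_type_threefold_hs_coeffs (n : ℕ) (hn : 3 ≤ n) :
    HSLaurentCoeffs
      (fun s => (1 - Real.exp (-(4 * (n : ℝ) * s / ((n : ℝ) + 1))))
        / ((1 - Real.exp (-(4 * s / ((n : ℝ) + 1))))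
           * (1 - Real.exp (-((2 * (n : ℝ) - 2) * s / ((n : ℝ) + 1))))
           * (1 - Real.exp (-(2 * (n : ℝ) * s / ((n : ℝ) + 1)))) ^ 2))
      3 (((n : ℝ) + 1) ^ 3 / (8 * (n : ℝ) * ((n : ℝ) - 1)))
        (((n : ℝ) + 1) ^ 3 / (8 * (n : ℝ) * ((n : ℝ) - 1))) := by
  have hN : (3:ℝ) ≤ (n:ℝ) := by exact_mod_cast hn
  have hG := hasDerivAt_Gf hN
  have hG0 := Gf_zero (n : ℝ)
  constructor
  · have hGt : Tendsto (Gf (n:ℝ)) (𝓝[>] (0:ℝ))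
        (𝓝 (((n:ℝ)+1)^3/(8*(n:ℝ)*((n:ℝ)-1)))) := by
      have h := hG.continuousAt.tendsto
      rw [hG0] at h
      exact h.mono_left nhdsWithin_le_nhds
    refine Filter.Tendsto.congr' ?_ hGt
    filter_upwards [self_mem_nhdsWithin] with s hs
    rw [Gf_key hN hs]
  · have hslope : Tendsto (slope (Gf (n:ℝ)) 0) (𝓝[≠] (0:ℝ))
        (𝓝 (((n:ℝ)+1)^3/(8*(n:ℝ)*((n:ℝ)-1)))) := hasDerivAt_iff_tendsto_slope.mp hG
    have hmono : 𝓝[>] (0:ℝ) ≤ 𝓝[≠] (0:ℝ) :=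
      nhdsWithin_mono 0 (fun x hx => Set.mem_compl_singleton_iff.mpr (ne_of_gt hx))
    refine Filter.Tendsto.congr' ?_ (hslope.mono_left hmono)
    filter_upwards [self_mem_nhdsWithin] with s hs
    have hs0 : s ≠ 0 := ne_of_gt hs
    have habs : ∀ E C : ℝ,
        (s^3*E - C)/(s - 0) = s^(3-1)*(E - C/s^3) := by
      intro E C
      rw [sub_zero]
      norm_num
      field_simp
    rw [slope_def_field, hG0, Gf_key hN hs, habs]
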